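/- In the sᵢ-stable case, the maps ∂ᵢ : H_C^{∗−sᵢ} → H_C^{∗sᵢ} and f ↦ (xᵢ − x_{i+1})·f/2 : H_C^{∗sᵢ} → H_C^{∗−sᵢ} are mutually inverse bijections, where H_C^{∗−sᵢ} = {f ∈ H_C : f ∗ sᵢ = −f}. -/
import Mathlib


open MvPolynomial

/-- The ring `H = Fun(Sₙ, ℂ[t₁,…,tₙ])`, with pointwise operations. -/
abbrev Hr (n : ℕ) := Equiv.Perm (Fin n) → MvPolynomial (Fin n) ℂ

/-- The element `xᵢ ∈ H`, given by `v ↦ t_{v(i)}`. -/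
noncomputable def xH {n : ℕ} (i : Fin n) : Hr n := fun v => X (v i)

/-- The element `tᵢ ∈ H`, the constant function `v ↦ tᵢ`. -/
noncomputable def tH {n : ℕ} (i : Fin n) : Hr n := fun _ => X i

/-- The right star action on `H`: `(g ∗ w)(v) = g(v w⁻¹)`. -/
noncomputable def starH {n : ℕ} (g : Hr n) (w : Equiv.Perm (Fin n)) : Hr n :=
  fun v => g (v * w⁻¹)

/-- The left dot action on `H`:
`(w · g)(v; t₁,…,tₙ) = g(w⁻¹ v; t_{w(1)},…,t_{w(n)})`. -/
noncomputable def dotH {n : ℕ} (w : Equiv.Perm (Fin n)) (g : Hr n) : Hr n :=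
  fun v => rename (⇑w) (g (w⁻¹ * v))


/-- `f` satisfies the divisibility condition `τ` for a transposition `τ = (j ↔ k)`:
`f − f∗τ` is a multiple of `xⱼ − xₖ` in `H` (i.e. pointwise, with quotients in
`ℂ[t₁,…,tₙ]`). -/
def condP {n : ℕ} (τ : Equiv.Perm (Fin n)) (f : Hr n) : Prop :=
  ∀ j k : Fin n, τ = Equiv.swap j k → (xH j - xH k) ∣ (f - starH f τ)

/-- The subring `H_C` of elements satisfying all conditions in a set `C` of
transpositions. -/
def HCset {n : ℕ} (C : Set (Equiv.Perm (Fin n))) : Set (Hr n) :=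
  {f | ∀ τ ∈ C, condP τ f}

namespace EigAux

variable {n : ℕ}

lemma starH_sub (f g : Hr n) (w : Equiv.Perm (Fin n)) :
    starH (f - g) w = starH f w - starH g w := rfl

lemma starH_add (f g : Hr n) (w : Equiv.Perm (Fin n)) :
    starH (f + g) w = starH f w + starH g w := rfl

lemma starH_mul (f g : Hr n) (w : Equiv.Perm (Fin n)) :
    starH (f * g) w = starH f w * starH g w := rfl

lemma starH_neg (f : Hr n) (w : Equiv.Perm (Fin n)) :
    starH (-f) w = -(starH f w) := rfl

lemma starH_smul (c : ℂ) (f : Hr n) (w : Equiv.Perm (Fin n)) :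
    starH (c • f) w = c • (starH f w) := rfl

lemma starH_xH (i : Fin n) (w : Equiv.Perm (Fin n)) :
    starH (xH i) w = xH (w⁻¹ i) := rfl

lemma pi_dvd_iff (f g : Hr n) : f ∣ g ↔ ∀ v, f v ∣ g v := by
  constructor
  · rintro ⟨c, rfl⟩ v; exact ⟨c v, rfl⟩
  · intro h
    exact ⟨fun v => (h v).choose, funext fun v => (h v).choose_spec⟩

/-- the substitution sending `X j ↦ X k`, all other variables to themselves -/
noncomputable def subst (j k : Fin n) :
    MvPolynomial (Fin n) ℂ →ₐ[ℂ] MvPolynomial (Fin n) ℂ :=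
  aeval (fun i => if i = j then X k else X i)

lemma subst_X (j k i : Fin n) :
    subst j k (X i) = if i = j then X k else X i := by
  simp [subst]

lemma dvd_sub_subst (j k : Fin n) (f : MvPolynomial (Fin n) ℂ) :
    (X j - X k : MvPolynomial (Fin n) ℂ) ∣ f - subst j k f := by
  induction f using MvPolynomial.induction_on with
  | C a => simp [subst]
  | add p q hp hq =>
      rw [map_add]
      have : p + q - (subst j k p + subst j k q)
          = (p - subst j k p) + (q - subst j k q) := by ring
      rw [this]; exact dvd_add hp hq
  | mul_X p i hp =>
      rw [map_mul, subst_X]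
      by_cases h : i = j
      · subst h
        rw [if_pos rfl]
        have : p * X i - subst i k p * X k
            = (p - subst i k p) * X i + subst i k p * (X i - X k) := by ring
        rw [this]
        exact dvd_add (hp.mul_right _) (Dvd.dvd.mul_left dvd_rfl _)
      · rw [if_neg h]
        have : p * X i - subst j k p * X i = (p - subst j k p) * X i := by ring
        rw [this]; exact hp.mul_right _

lemma dvd_of_subst_eq_zero (j k : Fin n) (f : MvPolynomial (Fin n) ℂ)
    (h : subst j k f = 0) : (X j - X k : MvPolynomial (Fin n) ℂ) ∣ f := by
  have := dvd_sub_subst j k f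
  rwa [h, sub_zero] at this

lemma prime_avoid (p q j k : Fin n) (hpq : p ≠ q) (hjk : j ≠ k)
    (h1 : ¬(p = j ∧ q = k)) (h2 : ¬(p = k ∧ q = j))
    (d : MvPolynomial (Fin n) ℂ)
    (h : (X j - X k : MvPolynomial (Fin n) ℂ) ∣ (X p - X q) * d) :
    (X j - X k : MvPolynomial (Fin n) ℂ) ∣ d := by
  obtain ⟨e, he⟩ := h
  have he' := congrArg (subst j k) he
  rw [map_mul, map_mul, map_sub, map_sub, subst_X, subst_X, subst_X, subst_X,
    if_pos rfl, if_neg (show ¬ k = j from fun h => hjk h.symm), sub_self, zero_mul] at he'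
  have hXne : (if p = j then X k else X p) - (if q = j then X k else (X q : MvPolynomial (Fin n) ℂ)) ≠ 0 := by
    by_cases hp : p = j
    · have hq : q ≠ j := fun h => hpq (hp.trans h.symm)
      have hqk : q ≠ k := fun h => h1 ⟨hp, h⟩
      rw [if_pos hp, if_neg hq]
      exact sub_ne_zero_of_ne (MvPolynomial.X_injective.ne (Ne.symm hqk))
    · by_cases hq : q = j
      · have hpk : p ≠ k := fun h => h2 ⟨h, hq⟩
        rw [if_neg hp, if_pos hq]
        exact sub_ne_zero_of_ne (MvPolynomial.X_injective.ne hpk)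
      · rw [if_neg hp, if_neg hq]
        exact sub_ne_zero_of_ne (MvPolynomial.X_injective.ne hpq)
  have : subst j k d = 0 := by
    rcases mul_eq_zero.mp he' with h' | h'
    · exact absurd h' hXne
    · exact h'
  exact dvd_of_subst_eq_zero j k d this

lemma keydvd (j k p : Fin n) :
    (xH j - xH k : Hr n) ∣ (xH p - xH (Equiv.swap j k p)) := by
  rcases eq_or_ne p j with rfl | hpj
  · rw [Equiv.swap_apply_left]
  · rcases eq_or_ne p k with rfl | hpk
    · rw [Equiv.swap_apply_right, ← neg_sub]
      exact Dvd.intro (-1) (by ring)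
    · rw [Equiv.swap_apply_of_ne_of_ne hpj hpk, sub_self]
      exact dvd_zero _

lemma keydvd2 (a b j k : Fin n) :
    (xH j - xH k : Hr n) ∣
      ((xH a - xH b) - starH (xH a - xH b) (Equiv.swap j k)) := by
  rw [starH_sub, starH_xH, starH_xH, Equiv.swap_inv]
  have : (xH a - xH b : Hr n) - (xH (Equiv.swap j k a) - xH (Equiv.swap j k b))
      = (xH a - xH (Equiv.swap j k a)) - (xH b - xH (Equiv.swap j k b)) := by ring
  rw [this]
  exact dvd_sub (keydvd j k a) (keydvd j k b)

lemma hcancel (a b : Fin n) (hab : a ≠ b) (g₁ g₂ : Hr n)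
    (h : (xH a - xH b) * g₁ = (xH a - xH b) * g₂) : g₁ = g₂ := by
  funext v
  have hv : (X (v a) - X (v b) : MvPolynomial (Fin n) ℂ) * g₁ v
      = (X (v a) - X (v b)) * g₂ v := congrFun h v
  have hne : (X (v a) - X (v b) : MvPolynomial (Fin n) ℂ) ≠ 0 :=
    sub_ne_zero_of_ne (MvPolynomial.X_injective.ne (v.injective.ne hab))
  exact mul_left_cancel₀ hne hv

end EigAux

/-- in the `s`-stable case (`s = swap a b ∈ C`, `b = a + 1`,
`sCs = C`), the divided difference from the (-1)-eigenspace of `f ↦ f∗s` on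
`HCset C` to the (+1)-eigenspace, and the map `f ↦ (xH a - xH b) * f / 2` in the
other direction, are mutually inverse bijections. -/
theorem eigenspace_bijection (n : ℕ) (a b : Fin n) (hab : (a : ℕ) + 1 = b)
    (C : Set (Equiv.Perm (Fin n)))
    (hC : ∀ τ ∈ C, Equiv.Perm.IsSwap τ)
    (hs : Equiv.swap a b ∈ C)
    (hstab : ∀ τ, τ ∈ C ↔ Equiv.swap a b * τ * Equiv.swap a b ∈ C) :
    (∀ f, f ∈ HCset C → starH f (Equiv.swap a b) = -f →
      ∃ g : Hr n, f - starH f (Equiv.swap a b) = (xH a - xH b) * g ∧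
        (g ∈ HCset C ∧ starH g (Equiv.swap a b) = g) ∧
        (2⁻¹ : ℂ) • ((xH a - xH b) * g) = f) ∧
    (∀ f, f ∈ HCset C → starH f (Equiv.swap a b) = f →
      ((2⁻¹ : ℂ) • ((xH a - xH b) * f) ∈ HCset C ∧
        starH ((2⁻¹ : ℂ) • ((xH a - xH b) * f)) (Equiv.swap a b)
          = -((2⁻¹ : ℂ) • ((xH a - xH b) * f))) ∧
      ∀ g : Hr n,
        (2⁻¹ : ℂ) • ((xH a - xH b) * f)
            - starH ((2⁻¹ : ℂ) • ((xH a - xH b) * f)) (Equiv.swap a b)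
          = (xH a - xH b) * g → g = f) := by
  classical
  have hab' : a ≠ b := by intro h; rw [h] at hab; omega
  have hXs : starH (xH a - xH b) (Equiv.swap a b) = -(xH a - xH b) := by
    rw [EigAux.starH_sub, EigAux.starH_xH, EigAux.starH_xH, Equiv.swap_inv,
      Equiv.swap_apply_left, Equiv.swap_apply_right]
    ring
  -- a helper for extracting `j ≠ k` from membership in `C`
  have hne_of_mem : ∀ τ ∈ C, ∀ j k : Fin n, τ = Equiv.swap j k → j ≠ k := by
    intro τ hτ j k hjk
    rintro rfl
    obtain ⟨x, y, hxy, hxy'⟩ := hC τ hτ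
    have hone : τ = 1 := by rw [hjk, Equiv.swap_self]; rfl
    rw [hone] at hxy'
    have := congrArg (fun p => p x) hxy'
    simp at this
    exact hxy this
  constructor
  · -- first direction
    intro f hf hneg
    obtain ⟨h, hh⟩ := hf (Equiv.swap a b) hs a b rfl
    rw [hneg, sub_neg_eq_add] at hh
    -- hh : f + f = (xH a - xH b) * h
    have hh2 : starH f (Equiv.swap a b) + starH f (Equiv.swap a b)
        = starH (xH a - xH b) (Equiv.swap a b) * starH h (Equiv.swap a b) :=
      congrArg (fun z => starH z (Equiv.swap a b)) hh
    have hgs : starH h (Equiv.swap a b) = h := by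
      apply EigAux.hcancel a b hab'
      rw [hneg, hXs] at hh2
      linear_combination hh + hh2
    have hmem : h ∈ HCset C := by
      intro τ hτ j k hjk
      have hjk' : j ≠ k := hne_of_mem τ hτ j k hjk
      subst hjk
      by_cases hcase : Equiv.swap j k = Equiv.swap a b
      · rw [hcase, hgs, sub_self]
        exact dvd_zero _
      · -- main case: pointwise prime avoidance
        have hfd := hf _ hτ j k rfl
        have hkey := EigAux.keydvd2 a b j k
        have hhh2 : starH f (Equiv.swap j k) + starH f (Equiv.swap j k)
            = starH (xH a - xH b) (Equiv.swap j k) * starH h (Equiv.swap j k) :=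
          congrArg (fun z => starH z (Equiv.swap j k)) hh
        obtain ⟨c1, hc1⟩ := hfd
        obtain ⟨c2, hc2⟩ := hkey
        have hbig : (xH j - xH k : Hr n) ∣
            (xH a - xH b) * (h - starH h (Equiv.swap j k)) :=
          ⟨c1 + c1 - c2 * starH h (Equiv.swap j k), by
            linear_combination (-1 : Hr n) * hh + hhh2 + 2 * hc1
              - hc2 * starH h (Equiv.swap j k)⟩
        rw [EigAux.pi_dvd_iff]
        intro v
        have hb' : (X (v j) - X (v k) : MvPolynomial (Fin n) ℂ)
            ∣ (X (v a) - X (v b)) * ((h - starH h (Equiv.swap j k)) v) :=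
          (EigAux.pi_dvd_iff _ _).mp hbig v
        refine EigAux.prime_avoid (v a) (v b) (v j) (v k)
          (v.injective.ne hab') (v.injective.ne hjk') ?_ ?_ _ hb'
        · rintro ⟨h1, h2⟩
          exact hcase (by rw [← v.injective h1, ← v.injective h2])
        · rintro ⟨h1, h2⟩
          apply hcase
          rw [← v.injective h1, ← v.injective h2, Equiv.swap_comm]
    refine ⟨h, ?_, ⟨hmem, hgs⟩, ?_⟩
    · rw [hneg, sub_neg_eq_add]; exact hh
    · rw [← hh]
      have : f + f = (2 : ℂ) • f := (two_smul ℂ f).symm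
      rw [this, smul_smul]
      norm_num
  · -- second direction
    intro f hf hfix
    have hFs : starH ((2⁻¹ : ℂ) • ((xH a - xH b) * f)) (Equiv.swap a b)
        = -((2⁻¹ : ℂ) • ((xH a - xH b) * f)) := by
      rw [EigAux.starH_smul, EigAux.starH_mul, hXs, hfix, neg_mul, smul_neg]
    refine ⟨⟨?_, hFs⟩, ?_⟩
    · -- membership in HCset C
      intro τ hτ j k hjk
      subst hjk
      obtain ⟨c1, hc1⟩ := hf _ hτ j k rfl
      obtain ⟨c2, hc2⟩ := EigAux.keydvd2 a b j k
      refine ⟨(2⁻¹ : ℂ) • ((xH a - xH b) * c1 + c2 * starH f (Equiv.swap j k)), ?_⟩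
      have hFτ : starH ((2⁻¹ : ℂ) • ((xH a - xH b) * f)) (Equiv.swap j k)
          = (2⁻¹ : ℂ) • (starH (xH a - xH b) (Equiv.swap j k)
              * starH f (Equiv.swap j k)) := rfl
      rw [hFτ, mul_smul_comm, ← smul_sub]
      congr 1
      linear_combination (xH a - xH b) * hc1 + starH f (Equiv.swap j k) * hc2
    · -- uniqueness
      intro g hg
      rw [hFs, sub_neg_eq_add] at hg
      have hFF : (2⁻¹ : ℂ) • ((xH a - xH b) * f) + (2⁻¹ : ℂ) • ((xH a - xH b) * f)
          = (xH a - xH b) * f := by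
        rw [← add_smul]; norm_num
      exact EigAux.hcancel a b hab' g f (by rw [← hg, hFF])
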